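/- The solution set of the equation a'' + r a' + r' a = 0, viewed inside the solution space of a''' + 2R a' + R' a = 0 with R = r' − (1/2)r², is closed under the vector-field Lie bracket: if a, b solve a'' + r a' + r' a = 0 then c = a b' − a' b also solves c'' + r c' + r' c = 0. -/

import Mathlib

/-- The solution set of `a'' + r a' + r' a = 0` is closed under the vector-field
Lie bracket: if `a`, `b` are solutions then `c = a b' - a' b` is a solution. -/
theorem second_order_closed_under_bracket (r a b : ℂ → ℂ)
    (hr : Differentiable ℂ r) (hr' : Differentiable ℂ (deriv r))
    (ha : Differentiable ℂ a) (ha' : Differentiable ℂ (deriv a))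
    (hb : Differentiable ℂ b) (hb' : Differentiable ℂ (deriv b))
    (hA : ∀ x, deriv (deriv a) x + r x * deriv a x + deriv r x * a x = 0)
    (hB : ∀ x, deriv (deriv b) x + r x * deriv b x + deriv r x * b x = 0) :
    ∀ x, deriv (deriv (fun t => a t * deriv b t - deriv a t * b t)) x
        + r x * deriv (fun t => a t * deriv b t - deriv a t * b t) x
        + deriv r x * (a x * deriv b x - deriv a x * b x) = 0 := by
  set c : ℂ → ℂ := fun t => a t * deriv b t - deriv a t * b t with hc_def
  have hc : Differentiable ℂ c := (ha.mul hb').sub (ha'.mul hb)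
  have hdc : deriv c = fun x => -(r x * c x) := by
    funext x
    have h1 : deriv c x = deriv a x * deriv b x + a x * deriv (deriv b) x
        - (deriv (deriv a) x * b x + deriv a x * deriv b x) := by
      rw [hc_def]
      rw [deriv_fun_sub ((ha x).fun_mul (hb' x)) ((ha' x).fun_mul (hb x)),
          deriv_fun_mul (ha x) (hb' x), deriv_fun_mul (ha' x) (hb x)]
    rw [h1]
    simp only [hc_def]
    linear_combination a x * hB x - b x * hA x
  intro x
  have h2 : deriv (deriv c) x = -(deriv r x * c x + r x * deriv c x) := by
    rw [hdc]
    rw [deriv.fun_neg, deriv_fun_mul (hr x) (hc x)]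
    rw [hdc]
  have h3 : deriv c x = -(r x * c x) := by rw [hdc]
  rw [h2, h3]
  simp only [hc_def]
  ring
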